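/- Let V_1, V_2 be subspaces of a real inner product space V, a a symmetric positive semidefinite bilinear form on V, and τ > 0. Suppose sequences u_1^n ∈ V_1, u_2^n ∈ V_2 with u^n = u_1^n + u_2^n satisfy the partially explicit scheme: (u^{n+1} - 2u^n + u^{n-1}, w) + (τ²/2) a(u_1^{n+1} + u_1^{n-1} + 2u_2^n, w) = 0 for all w ∈ V_1, and (u^{n+1} - 2u^n + u^{n-1}, w) + τ² a(u_1^n + u_2^n, w) = 0 for all w ∈ V_2. Then the discrete energy E^{n+1/2} = ‖u^{n+1} - u^n‖² + (τ²/2)(‖u_1^{n+1} + u_2^n‖_a² + ‖u_1^n + u_2^{n+1}‖_a²) - (τ²/2)‖u_2^{n+1} - u_2^n‖_a² satisfies E^{n+1/2} = E^{n-1/2}. -/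
import Mathlib


open RealInnerProductSpace

theorem stmt4 {V : Type*} [NormedAddCommGroup V] [InnerProductSpace ℝ V]
    (V1 V2 : Submodule ℝ V)
    (a : V →ₗ[ℝ] V →ₗ[ℝ] ℝ) (hsymm : ∀ x y, a x y = a y x) (hpsd : ∀ x, 0 ≤ a x x)
    (τ : ℝ) (hτ : 0 < τ)
    (u1 u2 : ℤ → V) (hu1 : ∀ n, u1 n ∈ V1) (hu2 : ∀ n, u2 n ∈ V2)
    (hscheme1 : ∀ n : ℤ, ∀ w ∈ V1,
      ⟪(u1 (n+1) + u2 (n+1)) - (2:ℝ) • (u1 n + u2 n) + (u1 (n-1) + u2 (n-1)), w⟫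
        + (τ^2 / 2) * a (u1 (n+1) + u1 (n-1) + (2:ℝ) • u2 n) w = 0)
    (hscheme2 : ∀ n : ℤ, ∀ w ∈ V2,
      ⟪(u1 (n+1) + u2 (n+1)) - (2:ℝ) • (u1 n + u2 n) + (u1 (n-1) + u2 (n-1)), w⟫
        + τ^2 * a (u1 n + u2 n) w = 0) :
    ∀ n : ℤ,
      ‖(u1 (n+1) + u2 (n+1)) - (u1 n + u2 n)‖^2
        + (τ^2 / 2) * (a (u1 (n+1) + u2 n) (u1 (n+1) + u2 n)
            + a (u1 n + u2 (n+1)) (u1 n + u2 (n+1)))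
        - (τ^2 / 2) * a (u2 (n+1) - u2 n) (u2 (n+1) - u2 n)
      = ‖(u1 n + u2 n) - (u1 (n-1) + u2 (n-1))‖^2
        + (τ^2 / 2) * (a (u1 n + u2 (n-1)) (u1 n + u2 (n-1))
            + a (u1 (n-1) + u2 n) (u1 (n-1) + u2 n))
        - (τ^2 / 2) * a (u2 n - u2 (n-1)) (u2 n - u2 (n-1)) := by
  intro n
  have h1 := hscheme1 n (u1 (n+1) - u1 (n-1)) (sub_mem (hu1 _) (hu1 _))
  have h2 := hscheme2 n (u2 (n+1) - u2 (n-1)) (sub_mem (hu2 _) (hu2 _))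
  set p := u1 (n+1) with hp
  set q := u1 n with hq
  set r := u1 (n-1) with hr
  set s := u2 (n+1) with hs
  set t := u2 n with ht
  set v := u2 (n-1) with hv
  rw [← real_inner_self_eq_norm_sq, ← real_inner_self_eq_norm_sq]
  simp only [map_add, map_sub, map_smul, LinearMap.add_apply, LinearMap.sub_apply,
    LinearMap.smul_apply, smul_eq_mul, inner_add_left, inner_add_right, inner_sub_left,
    inner_sub_right, real_inner_smul_left, real_inner_smul_right] at h1 h2 ⊢
  simp only [hsymm q p, hsymm r p, hsymm r q, hsymm s p, hsymm s q, hsymm s r,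
    hsymm t p, hsymm t q, hsymm t r, hsymm t s, hsymm v p, hsymm v q, hsymm v r,
    hsymm v s, hsymm v t, real_inner_comm q p, real_inner_comm r p, real_inner_comm r q,
    real_inner_comm s p, real_inner_comm s q, real_inner_comm s r, real_inner_comm t p,
    real_inner_comm t q, real_inner_comm t r, real_inner_comm t s, real_inner_comm v p,
    real_inner_comm v q, real_inner_comm v r, real_inner_comm v s,
    real_inner_comm v t] at h1 h2 ⊢
  linear_combination h1 + h2
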